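/- Let X = ℝ² with the Euclidean norm and let U be the evolution operator defined by U(t,t₀)(x₁,x₂) = (ξ₁,ξ₂), where ξ₁ = e^{t−t₀} cos t (x₁ cos t₀ + x₂ sin t₀) + e^{−(t−t₀)} sin t (x₁ sin t₀ − x₂ cos t₀) and ξ₂ = e^{t−t₀} sin t (x₁ cos t₀ + x₂ sin t₀) − e^{−(t−t₀)} cos t (x₁ sin t₀ − x₂ cos t₀). Then U is weakly exponentially unstable: for each x₀ ∈ ℝ², writing x₀ = (r₀ cos t₀, r₀ sin t₀) with r₀ ≥ 0 and t₀ ∈ [0,2π), one has ‖U(t,t₀)x₀‖ = r₀ e^{t−t₀} = e^{t−s}‖U(s,t₀)x₀‖ for all t ≥ s ≥ t₀. -/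

import Mathlib

/-- The evolution operator on `ℝ²` (with the Euclidean norm) from the paper's example. -/
noncomputable def Uex (t t₀ : ℝ) (x : EuclideanSpace ℝ (Fin 2)) : EuclideanSpace ℝ (Fin 2) :=
  (WithLp.equiv 2 (Fin 2 → ℝ)).symm
    ![Real.exp (t - t₀) * Real.cos t * (x 0 * Real.cos t₀ + x 1 * Real.sin t₀) +
        Real.exp (-(t - t₀)) * Real.sin t * (x 0 * Real.sin t₀ - x 1 * Real.cos t₀),
      Real.exp (t - t₀) * Real.sin t * (x 0 * Real.cos t₀ + x 1 * Real.sin t₀) -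
        Real.exp (-(t - t₀)) * Real.cos t * (x 0 * Real.sin t₀ - x 1 * Real.cos t₀)]

lemma norm_Uex (t t₀ : ℝ) (x : EuclideanSpace ℝ (Fin 2))
    (hb : x 0 * Real.sin t₀ - x 1 * Real.cos t₀ = 0) :
    ‖Uex t t₀ x‖ = |x 0 * Real.cos t₀ + x 1 * Real.sin t₀| * Real.exp (t - t₀) := by
  set a := x 0 * Real.cos t₀ + x 1 * Real.sin t₀ with ha
  rw [EuclideanSpace.norm_eq, Fin.sum_univ_two]
  simp only [Uex, WithLp.equiv_symm_apply, WithLp.ofLp_toLp, Matrix.cons_val_zero, Matrix.cons_val_one,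
    Matrix.head_cons, hb, Real.norm_eq_abs, sq_abs, mul_zero, add_zero, sub_zero, ← ha]
  have key : (Real.exp (t - t₀) * Real.cos t * a) ^ 2 + (Real.exp (t - t₀) * Real.sin t * a) ^ 2
      = (|a| * Real.exp (t - t₀)) ^ 2 := by
    have hc := Real.cos_sq_add_sin_sq t
    calc (Real.exp (t - t₀) * Real.cos t * a) ^ 2 + (Real.exp (t - t₀) * Real.sin t * a) ^ 2
        = Real.exp (t - t₀) ^ 2 * a ^ 2 * (Real.cos t ^ 2 + Real.sin t ^ 2) := by ring
      _ = (|a| * Real.exp (t - t₀)) ^ 2 := by rw [hc, mul_pow, sq_abs]; ring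
  rw [key, Real.sqrt_sq (by positivity)]

/-- `Uex` is weakly exponentially unstable: for each `x₀ ∈ ℝ²`, writing
`x₀ = (r₀ cos t₀, r₀ sin t₀)` with `r₀ ≥ 0` and `t₀ ∈ [0, 2π)`, one has
`‖U(t,t₀)x₀‖ = r₀ e^(t-t₀) = e^(t-s) ‖U(s,t₀)x₀‖` for all `t ≥ s ≥ t₀`. -/

theorem Uex_weakly_exponentially_unstable :
    (∃ N : ℝ, 1 ≤ N ∧ ∃ ν : ℝ, 0 < ν ∧ ∀ x₀ : EuclideanSpace ℝ (Fin 2), ∃ t₀ : ℝ, 0 ≤ t₀ ∧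
        ∀ s t : ℝ, t₀ ≤ s → s ≤ t →
          N * ‖Uex t t₀ x₀‖ ≥ Real.exp (ν * (t - s)) * ‖Uex s t₀ x₀‖) ∧
    (∀ (x₀ : EuclideanSpace ℝ (Fin 2)) (r₀ t₀ : ℝ), 0 ≤ r₀ → 0 ≤ t₀ → t₀ < 2 * Real.pi →
        x₀ = (WithLp.equiv 2 (Fin 2 → ℝ)).symm ![r₀ * Real.cos t₀, r₀ * Real.sin t₀] →
        ∀ s t : ℝ, t₀ ≤ s → s ≤ t →
          ‖Uex t t₀ x₀‖ = r₀ * Real.exp (t - t₀) ∧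
          ‖Uex t t₀ x₀‖ = Real.exp (t - s) * ‖Uex s t₀ x₀‖) := by
  constructor
  · refine ⟨1, le_refl 1, 1, one_pos, fun x₀ => ?_⟩
    by_cases h0 : x₀ 0 = 0 ∧ x₀ 1 = 0
    · refine ⟨0, le_refl 0, fun s t hs hst => ?_⟩
      have hb : x₀ 0 * Real.sin 0 - x₀ 1 * Real.cos 0 = 0 := by
        rw [h0.1, h0.2]; ring
      rw [norm_Uex t 0 x₀ hb, norm_Uex s 0 x₀ hb]
      apply ge_of_eq
      rw [one_mul, show (1:ℝ) * (t - s) = t - s by ring, ← mul_assoc,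
        mul_comm (Real.exp (t - s)) _, mul_assoc, ← Real.exp_add]
      ring_nf
    · set z : ℂ := ⟨x₀ 0, x₀ 1⟩ with hz
      have hz0 : z ≠ 0 := by
        intro h
        exact h0 ⟨congrArg Complex.re h, congrArg Complex.im h⟩
      set t₀ : ℝ := Complex.arg z + 2 * Real.pi with ht₀
      have hpos : 0 ≤ t₀ := by
        have := Complex.neg_pi_lt_arg z
        have := Real.pi_pos
        simp only [ht₀]; linarith
      have hcos : Real.cos t₀ = z.re / ‖z‖ := by
        rw [ht₀, Real.cos_add_two_pi, Complex.cos_arg hz0]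
      have hsin : Real.sin t₀ = z.im / ‖z‖ := by
        rw [ht₀, Real.sin_add_two_pi, Complex.sin_arg]
      have hb : x₀ 0 * Real.sin t₀ - x₀ 1 * Real.cos t₀ = 0 := by
        rw [hcos, hsin]
        show z.re * (z.im / ‖z‖) - z.im * (z.re / ‖z‖) = 0
        ring
      refine ⟨t₀, hpos, fun s t hs hst => ?_⟩
      rw [norm_Uex t t₀ x₀ hb, norm_Uex s t₀ x₀ hb]
      apply ge_of_eq
      rw [one_mul, show (1:ℝ) * (t - s) = t - s by ring, ← mul_assoc,
        mul_comm (Real.exp (t - s)) _, mul_assoc, ← Real.exp_add]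
      ring_nf
  · intro x₀ r₀ t₀ hr₀ ht₀ ht₀' hx s t hs hst
    have h0 : x₀ 0 = r₀ * Real.cos t₀ := by rw [hx]; simp [WithLp.equiv_symm_apply, WithLp.ofLp_toLp]
    have h1 : x₀ 1 = r₀ * Real.sin t₀ := by rw [hx]; simp [WithLp.equiv_symm_apply, WithLp.ofLp_toLp]
    have hb : x₀ 0 * Real.sin t₀ - x₀ 1 * Real.cos t₀ = 0 := by rw [h0, h1]; ring
    have ha : x₀ 0 * Real.cos t₀ + x₀ 1 * Real.sin t₀ = r₀ := by
      rw [h0, h1]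
      have := Real.cos_sq_add_sin_sq t₀
      nlinarith
    have hnorm : ∀ u : ℝ, ‖Uex u t₀ x₀‖ = r₀ * Real.exp (u - t₀) := by
      intro u
      rw [norm_Uex u t₀ x₀ hb, ha, abs_of_nonneg hr₀]
    refine ⟨hnorm t, ?_⟩
    rw [hnorm t, hnorm s, ← mul_assoc, mul_comm (Real.exp (t - s)) _, mul_assoc, ← Real.exp_add]
    ring_nf
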